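/- Let R be a commutative ring of characteristic 0 with fraction field K, let m ≥ 2 be an integer, and let φ(x) = x^m · Σ_{k≥0} b_k x^k ∈ R[[x]] with b_0 = 1 and all b_k ∈ R. Then the Böttcher coordinate f_φ(x) and its compositional inverse f_φ^{-1}(x) are both of the form x · Σ_{k≥0} (a_k/(m^k · k!)) x^k with a_0 = 1 and a_k ∈ R for all k. -/

import Mathlib

open PowerSeries Finset

/-- Composition `f(g(x))` of formal power series, intended for `g` with zero
constant coefficient. -/
noncomputable def PowerSeries.comp {K : Type*} [CommSemiring K] (f g : PowerSeries K) :
    PowerSeries K :=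
  PowerSeries.mk fun n =>
    PowerSeries.coeff n
      (∑ k ∈ Finset.range (n + 1), PowerSeries.C (PowerSeries.coeff k f) * g ^ k)

namespace BotAux

variable {K : Type*} [CommRing K]

/-- substitution: `psub g A = A(g(x))`. -/
noncomputable def psub (g A : PowerSeries K) : PowerSeries K :=
  PowerSeries.mk fun n => ∑ k ∈ Finset.range (n + 1), coeff k A * coeff n (g ^ k)

lemma coeff_psub (g A : PowerSeries K) (n : ℕ) :
    coeff n (psub g A) = ∑ k ∈ Finset.range (n + 1), coeff k A * coeff n (g ^ k) :=
  coeff_mk _ _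

lemma coeff_pow_eq_zero {g : PowerSeries K} (hg : constantCoeff g = 0)
    {n k : ℕ} (h : n < k) : coeff n (g ^ k) = 0 := by
  have : (X : PowerSeries K) ^ k ∣ g ^ k := pow_dvd_pow_of_dvd (X_dvd_iff.mpr hg) k
  exact (X_pow_dvd_iff.mp this) n h

lemma coeff_psub_ext {g : PowerSeries K} (hg : constantCoeff g = 0) (A : PowerSeries K)
    {n N : ℕ} (h : n < N) :
    coeff n (psub g A) = ∑ k ∈ Finset.range N, coeff k A * coeff n (g ^ k) := by
  rw [coeff_psub]
  apply Finset.sum_subset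
  · exact Finset.range_subset_range.mpr h
  · intro k _ hk
    rw [coeff_pow_eq_zero hg (by simpa using hk), mul_zero]

lemma psub_add (g A B : PowerSeries K) : psub g (A + B) = psub g A + psub g B := by
  ext n
  rw [map_add, coeff_psub, coeff_psub, coeff_psub, ← Finset.sum_add_distrib]
  exact Finset.sum_congr rfl fun k _ => by rw [map_add, add_mul]

lemma psub_C (g : PowerSeries K) (r : K) : psub g (C r) = C r := by
  ext n
  rw [coeff_psub]
  rcases Nat.eq_zero_or_pos n with rfl | hn
  · simp
  · rw [Finset.sum_eq_zero, PowerSeries.coeff_C, if_neg (by omega)]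
    intro k hk
    rcases Nat.eq_zero_or_pos k with rfl | hk0
    · rw [pow_zero, PowerSeries.coeff_one, if_neg (by omega), mul_zero]
    · rw [PowerSeries.coeff_C, if_neg (by omega), zero_mul]

lemma psub_one (g : PowerSeries K) : psub g (1 : PowerSeries K) = 1 := by
  have := psub_C g (1 : K); simpa using this

lemma psub_X {g : PowerSeries K} (hg : constantCoeff g = 0) : psub g X = g := by
  ext n
  rw [coeff_psub]
  rcases Nat.eq_zero_or_pos n with rfl | hn
  · rw [Finset.sum_range_one, pow_zero, PowerSeries.coeff_X, if_neg (by omega), zero_mul,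
      coeff_zero_eq_constantCoeff, hg]
  · rw [Finset.sum_eq_single 1]
    · simp
    · intro k hk hk1
      rw [PowerSeries.coeff_X, if_neg hk1, zero_mul]
    · intro h
      simp only [Finset.mem_range] at h
      omega

lemma psub_X_right (A : PowerSeries K) : psub X A = A := by
  ext n
  rw [coeff_psub, Finset.sum_eq_single n]
  · rw [coeff_X_pow, if_pos rfl, mul_one]
  · intro k _ hk
    rw [coeff_X_pow, if_neg (fun h => hk h.symm), mul_zero]
  · intro h
    simp at h

/-- triangle summation helper -/
lemma triangle_sum (n : ℕ) (F : ℕ × ℕ → K) (hF : ∀ p : ℕ × ℕ, n < p.1 + p.2 → F p = 0) :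
    ∑ p ∈ Finset.range (n+1) ×ˢ Finset.range (n+1), F p
      = ∑ k ∈ Finset.range (n+1), ∑ p ∈ antidiagonal k, F p := by
  set s := (Finset.range (n+1) ×ˢ Finset.range (n+1)).filter (fun p => p.1 + p.2 ≤ n) with hs
  have h1 : ∀ k ∈ Finset.range (n+1),
      ∑ p ∈ antidiagonal k, F p = ∑ p ∈ s.filter (fun p => p.1 + p.2 = k), F p := by
    intro k hk
    apply Finset.sum_congr _ (fun _ _ => rfl)
    ext p
    simp only [hs, Finset.HasAntidiagonal.mem_antidiagonal, Finset.mem_filter, Finset.mem_product,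
      Finset.mem_range] at *
    omega
  have h2 : ∑ k ∈ Finset.range (n+1), ∑ p ∈ s.filter (fun p => p.1 + p.2 = k), F p
      = ∑ p ∈ s, F p := by
    apply Finset.sum_fiberwise_of_maps_to
    intro p hp
    simp only [hs, Finset.mem_filter] at hp
    simp only [Finset.mem_range]
    omega
  have h3 : ∑ p ∈ s, F p = ∑ p ∈ Finset.range (n+1) ×ˢ Finset.range (n+1), F p := by
    apply Finset.sum_subset (Finset.filter_subset _ _)
    intro p hp hnp
    apply hF
    simp only [hs, Finset.mem_filter, hp, true_and] at hnp
    omega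
  rw [Finset.sum_congr rfl h1, h2, h3]

lemma psub_mul {g : PowerSeries K} (hg : constantCoeff g = 0) (A B : PowerSeries K) :
    psub g (A * B) = psub g A * psub g B := by
  ext n
  rw [coeff_mul, coeff_psub]
  calc ∑ k ∈ Finset.range (n+1), coeff k (A * B) * coeff n (g ^ k)
      = ∑ k ∈ Finset.range (n+1), ∑ p ∈ antidiagonal k,
          (coeff p.1 A * coeff p.2 B * coeff n (g ^ (p.1 + p.2))) := by
        refine Finset.sum_congr rfl fun k _ => ?_
        rw [coeff_mul, Finset.sum_mul]
        exact Finset.sum_congr rfl fun p hp => by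
          rw [Finset.HasAntidiagonal.mem_antidiagonal.mp hp]
    _ = ∑ p ∈ Finset.range (n+1) ×ˢ Finset.range (n+1),
          (coeff p.1 A * coeff p.2 B * coeff n (g ^ (p.1 + p.2))) := by
        rw [triangle_sum]
        intro p hp
        rw [coeff_pow_eq_zero hg hp, mul_zero]
    _ = ∑ q ∈ Finset.range (n+1) ×ˢ Finset.range (n+1),
          ∑ p ∈ antidiagonal n,
            (coeff q.1 A * coeff p.1 (g ^ q.1)) * (coeff q.2 B * coeff p.2 (g ^ q.2)) := by
        refine Finset.sum_congr rfl fun q _ => ?_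
        have : coeff n (g ^ (q.1 + q.2)) = ∑ p ∈ antidiagonal n,
            coeff p.1 (g ^ q.1) * coeff p.2 (g ^ q.2) := by
          rw [pow_add, coeff_mul]
        rw [this, Finset.mul_sum]
        refine Finset.sum_congr rfl fun p _ => by ring
    _ = ∑ p ∈ antidiagonal n, coeff p.1 (psub g A) * coeff p.2 (psub g B) := by
        rw [Finset.sum_comm]
        refine Finset.sum_congr rfl fun p hp => ?_
        rw [coeff_psub_ext hg A (Nat.lt_succ_of_le (Finset.HasAntidiagonal.antidiagonal.fst_le hp)),
          coeff_psub_ext hg B (Nat.lt_succ_of_le (Finset.HasAntidiagonal.antidiagonal.snd_le hp)),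
          Finset.sum_mul_sum, ← Finset.sum_product']

lemma psub_pow {g : PowerSeries K} (hg : constantCoeff g = 0) (A : PowerSeries K) (k : ℕ) :
    psub g (A ^ k) = (psub g A) ^ k := by
  induction k with
  | zero => simpa using psub_one g
  | succ k ih => rw [pow_succ, pow_succ, psub_mul hg, ih]

lemma psub_assoc {f g : PowerSeries K} (hf : constantCoeff f = 0)
    (hg : constantCoeff g = 0) (A : PowerSeries K) :
    psub g (psub f A) = psub (psub g f) A := by
  ext n
  rw [coeff_psub, coeff_psub]
  calc ∑ j ∈ Finset.range (n+1), coeff j (psub f A) * coeff n (g ^ j)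
      = ∑ j ∈ Finset.range (n+1), ∑ k ∈ Finset.range (n+1),
          coeff k A * coeff j (f ^ k) * coeff n (g ^ j) := by
        refine Finset.sum_congr rfl fun j hj => ?_
        rw [coeff_psub_ext hf A (Finset.mem_range.mp hj), Finset.sum_mul]
    _ = ∑ k ∈ Finset.range (n+1), coeff k A *
          ∑ j ∈ Finset.range (n+1), coeff j (f ^ k) * coeff n (g ^ j) := by
        rw [Finset.sum_comm]
        refine Finset.sum_congr rfl fun k _ => ?_
        rw [Finset.mul_sum]
        refine Finset.sum_congr rfl fun j _ => by ring
    _ = ∑ k ∈ Finset.range (n+1), coeff k A * coeff n ((psub g f) ^ k) := by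
        refine Finset.sum_congr rfl fun k _ => ?_
        rw [← psub_pow hg, coeff_psub_ext hg (f ^ k) (Nat.lt_succ_self n)]

lemma constantCoeff_psub {g : PowerSeries K} (_hg : constantCoeff g = 0) (A : PowerSeries K) :
    constantCoeff (psub g A) = constantCoeff A := by
  rw [← coeff_zero_eq_constantCoeff_apply, coeff_psub]
  simp

lemma derivative_psub {g : PowerSeries K} (hg : constantCoeff g = 0) (A : PowerSeries K) :
    d⁄dX K (psub g A) = psub g (d⁄dX K A) * d⁄dX K g := by
  ext n
  rw [coeff_derivative, coeff_psub_ext hg A (show n+1 < n+2 by omega), Finset.sum_mul]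
  have hpow : ∀ k : ℕ, coeff (n+1) (g ^ k) * ((n:K)+1)
      = (k : K) * coeff n (g ^ (k-1) * d⁄dX K g) := by
    intro k
    rw [← coeff_derivative, Derivation.leibniz_pow]
    rw [smul_eq_mul (a := g ^ (k-1))]
    rw [← Nat.cast_smul_eq_nsmul K, map_smul, smul_eq_mul]
  calc ∑ k ∈ Finset.range (n+2), coeff k A * coeff (n+1) (g ^ k) * ((n:K)+1)
      = ∑ k ∈ Finset.range (n+2),
          coeff k A * ((k:K) * coeff n (g ^ (k-1) * d⁄dX K g)) := by
        refine Finset.sum_congr rfl fun k _ => ?_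
        rw [mul_assoc, hpow k]
    _ = ∑ j ∈ Finset.range (n+1),
          coeff (j+1) A * ((j:K)+1) * coeff n (g ^ j * d⁄dX K g) := by
        rw [Finset.sum_range_succ' (fun k => coeff k A * ((k:K) * coeff n (g ^ (k-1) * d⁄dX K g)))]
        simp only [Nat.cast_zero, zero_mul, mul_zero, add_zero, Nat.add_sub_cancel]
        refine Finset.sum_congr rfl fun j _ => ?_
        push_cast
        ring
    _ = coeff n (psub g (d⁄dX K A) * d⁄dX K g) := by
        rw [coeff_mul]
        have : ∀ p : ℕ × ℕ, p ∈ antidiagonal n →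
            coeff p.1 (psub g (d⁄dX K A)) * coeff p.2 (d⁄dX K g)
              = ∑ j ∈ Finset.range (n+1),
                  coeff (j+1) A * ((j:K)+1) * (coeff p.1 (g ^ j) * coeff p.2 (d⁄dX K g)) := by
          intro p hp
          rw [coeff_psub_ext hg _ (Nat.lt_succ_of_le (Finset.HasAntidiagonal.antidiagonal.fst_le hp)),
            Finset.sum_mul]
          refine Finset.sum_congr rfl fun j _ => ?_
          rw [coeff_derivative]
          ring
        rw [Finset.sum_congr rfl this, Finset.sum_comm]
        refine Finset.sum_congr rfl fun j _ => ?_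
        rw [coeff_mul, Finset.mul_sum]

lemma coeff_X_pow_mul_if (A : PowerSeries K) (k n : ℕ) :
    coeff n ((X : PowerSeries K) ^ k * A) = if k ≤ n then coeff (n - k) A else 0 := by
  split_ifs with h
  · obtain ⟨d, rfl⟩ := Nat.exists_eq_add_of_le h
    rw [add_comm k d, coeff_X_pow_mul, Nat.add_sub_cancel]
  · have : (X : PowerSeries K) ^ k ∣ X ^ k * A := Dvd.intro _ rfl
    exact X_pow_dvd_iff.mp this n (by omega)

lemma coeff_psub_X_pow {m : ℕ} (hm : 1 ≤ m) (A : PowerSeries K) (n : ℕ) :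
    coeff n (psub ((X : PowerSeries K) ^ m) A)
      = if m ∣ n then coeff (n / m) A else 0 := by
  rw [coeff_psub]
  have hterm : ∀ k, coeff k A * coeff n ((X ^ m : PowerSeries K) ^ k)
      = coeff k A * (if n = m * k then 1 else 0) := by
    intro k
    rw [← pow_mul, coeff_X_pow]
  split_ifs with h
  · obtain ⟨d, rfl⟩ := h
    rw [Finset.sum_congr rfl (fun k _ => hterm k), Finset.sum_eq_single d]
    · rw [if_pos rfl, mul_one, Nat.mul_div_cancel_left d (by omega)]
    · intro k _ hk
      rw [if_neg (fun hc => hk (Nat.eq_of_mul_eq_mul_left (by omega) hc.symm)), mul_zero]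
    · intro hd
      exfalso
      apply hd
      rw [Finset.mem_range]
      nlinarith
  · apply Finset.sum_eq_zero
    intro k _
    rw [hterm, if_neg (fun hc => h ⟨k, hc⟩), mul_zero]

lemma coeff_self_pow {g : PowerSeries K} (hg0 : constantCoeff g = 0)
    (hg1 : coeff 1 g = 1) (n : ℕ) : coeff n (g ^ n) = 1 := by
  induction n with
  | zero => simp
  | succ n ih =>
    rw [pow_succ, coeff_mul, Finset.sum_eq_single (n, 1)]
    · rw [ih, hg1, one_mul]
    · rintro ⟨a, b⟩ hab hne
      rw [Finset.HasAntidiagonal.mem_antidiagonal] at hab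
      rcases lt_trichotomy a n with h | rfl | h
      · rw [coeff_pow_eq_zero hg0 h, zero_mul]
      · exact absurd (by omega : b = 1) (by simpa using fun h' => hne (by simp [h']))
      · have hb : b = 0 := by omega
        have ha : a = n + 1 := by omega
        subst hb
        rw [coeff_zero_eq_constantCoeff_apply, hg0, mul_zero]
    · intro h
      exact absurd (Finset.HasAntidiagonal.mem_antidiagonal.mpr (by simp)) h

lemma psub_cancel {g p q : PowerSeries K} (hg0 : constantCoeff g = 0)
    (hg1 : coeff 1 g = 1) (h : psub g p = psub g q) : p = q := by
  ext n
  induction n using Nat.strong_induction_on with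
  | _ n ih =>
    have hc : coeff n (psub g p) = coeff n (psub g q) := by rw [h]
    rw [coeff_psub, coeff_psub, Finset.sum_range_succ, Finset.sum_range_succ,
      coeff_self_pow hg0 hg1, mul_one, mul_one] at hc
    have hsum : ∑ k ∈ Finset.range n, coeff k p * coeff n (g ^ k)
        = ∑ k ∈ Finset.range n, coeff k q * coeff n (g ^ k) := by
      refine Finset.sum_congr rfl fun k hk => ?_
      rw [ih k (Finset.mem_range.mp hk)]
    rw [hsum] at hc
    exact add_left_cancel hc

lemma map_derivative {R : Type*} [CommRing R] (ρ : R →+* K) (A : PowerSeries R) :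
    d⁄dX K (A.map ρ) = (d⁄dX R A).map ρ := by
  ext n
  rw [coeff_derivative, coeff_map, coeff_map, coeff_derivative, map_mul]
  congr 1
  rw [map_add, map_natCast ρ, map_one]

end BotAux


namespace BotAux
variable {K : Type*} [CommRing K]

lemma comp_eq_psub (A g : PowerSeries K) : PowerSeries.comp A g = psub g A := by
  ext n
  rw [PowerSeries.comp, coeff_mk, coeff_psub, map_sum]
  exact Finset.sum_congr rfl fun k _ => by rw [coeff_C_mul]

end BotAux

open BotAux

set_option maxHeartbeats 1000000 in
/-- For `φ = x^m ∑ b_k x^k ∈ R[[x]]` with `b_0 = 1`, the Böttcher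
coordinate and its compositional inverse have the form
`x ∑ (a_k/(m^k k!)) x^k` with `a_0 = 1` and all `a_k ∈ R`. -/
theorem bottcher_denominator_bound {R K : Type*} [CommRing R] [CharZero R]
    [Field K] [Algebra R K] [IsFractionRing R K]
    (m : ℕ) (hm : 2 ≤ m)
    (φ : PowerSeries R) (hφlow : ∀ k < m, PowerSeries.coeff k φ = 0)
    (hφlead : PowerSeries.coeff m φ = 1)
    (f : PowerSeries K) (hf0 : PowerSeries.coeff 0 f = 0)
    (hf1 : PowerSeries.coeff 1 f = 1)
    (hfB : (φ.map (algebraMap R K)).comp f = f.comp (PowerSeries.X ^ m))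
    (g : PowerSeries K) (hg0 : PowerSeries.coeff 0 g = 0)
    (hg1 : PowerSeries.coeff 1 g = 1)
    (hginv : f.comp g = PowerSeries.X) :
    (∃ a : ℕ → R, a 0 = 1 ∧ ∀ k,
        PowerSeries.coeff (k + 1) f
          = algebraMap R K (a k) / ((m : K) ^ k * (Nat.factorial k : K))) ∧
      (∃ a : ℕ → R, a 0 = 1 ∧ ∀ k,
        PowerSeries.coeff (k + 1) g
          = algebraMap R K (a k) / ((m : K) ^ k * (Nat.factorial k : K))) := by
  classical
  -- basic setup
  have hinj : Function.Injective (algebraMap R K) := IsFractionRing.injective R K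
  haveI : CharZero K := charZero_of_injective_algebraMap hinj
  have hm0 : (m : K) ≠ 0 := Nat.cast_ne_zero.mpr (by omega)
  set SR : Subring K := (algebraMap R K).range with hSR
  have natmem : ∀ j : ℕ, ((j : K)) ∈ SR := fun j => ⟨(j : R), by push_cast; ring⟩
  have mmem : ((m : K)) ∈ SR := natmem m
  have workhorse : ∀ (E e a1 b1 a2 b2 a3 b3 : ℕ) (x y z w : K),
      (m:K)^a1 * (b1.factorial : K) * x ∈ SR →
      (m:K)^a2 * (b2.factorial : K) * y ∈ SR →
      (m:K)^a3 * (b3.factorial : K) * z ∈ SR →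
      w ∈ SR → a1 + a2 + a3 ≤ E → b1 + b2 + b3 ≤ e →
      (m:K)^E * (e.factorial : K) * (x * y * z * w) ∈ SR := by
    intro E e a1 b1 a2 b2 a3 b3 x y z w h1 h2 h3 hw hE he
    obtain ⟨N, hN⟩ : b1.factorial * b2.factorial * b3.factorial ∣ e.factorial := by
      calc b1.factorial * b2.factorial * b3.factorial
          ∣ (b1 + b2).factorial * b3.factorial :=
            mul_dvd_mul (Nat.factorial_mul_factorial_dvd_factorial_add b1 b2) dvd_rfl
        _ ∣ (b1 + b2 + b3).factorial := Nat.factorial_mul_factorial_dvd_factorial_add _ _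
        _ ∣ e.factorial := Nat.factorial_dvd_factorial he
    have key : (m:K)^E * (e.factorial : K) * (x * y * z * w)
        = ((m:K)^(E - (a1+a2+a3)) * (N : K)) *
          (((m:K)^a1 * (b1.factorial : K) * x) * ((m:K)^a2 * (b2.factorial : K) * y) *
            ((m:K)^a3 * (b3.factorial : K) * z) * w) := by
      have hpow : (m:K)^E = (m:K)^(E - (a1+a2+a3)) * ((m:K)^a1 * (m:K)^a2 * (m:K)^a3) := by
        rw [← pow_add, ← pow_add, ← pow_add]
        congr 1
        omega
      have hfac : ((e.factorial : ℕ) : K)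
          = ((b1.factorial : K) * (b2.factorial : K) * (b3.factorial : K)) * (N : K) := by
        rw [hN]
        push_cast
        ring
      rw [hpow, hfac]
      ring
    rw [key]
    exact mul_mem (mul_mem (pow_mem mmem _) (natmem N))
      (mul_mem (mul_mem (mul_mem h1 h2) h3) hw)
  -- power series facts
  have hf0' : constantCoeff f = 0 := by rw [← coeff_zero_eq_constantCoeff_apply]; exact hf0
  have hg0' : constantCoeff g = 0 := by rw [← coeff_zero_eq_constantCoeff_apply]; exact hg0
  have hXm0 : constantCoeff ((X : PowerSeries K) ^ m) = 0 := by
    rw [map_pow, constantCoeff_X, zero_pow (by omega)]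
  have hXne : (X : PowerSeries K) ^ m ≠ 0 := pow_ne_zero _ X_ne_zero
  set φb : PowerSeries K := φ.map (algebraMap R K) with hφbdef
  have hφb0 : constantCoeff φb = 0 := by
    rw [← coeff_zero_eq_constantCoeff_apply, hφbdef, coeff_map, hφlow 0 (by omega), map_zero]
  set BR : PowerSeries R := PowerSeries.mk (fun n => PowerSeries.coeff (n + m) φ) with hBRdef
  have hφBR : φ = X ^ m * BR := by
    ext n
    rw [coeff_X_pow_mul_if]
    split_ifs with h
    · rw [hBRdef, coeff_mk, Nat.sub_add_cancel h]
    · exact hφlow n (by omega)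
  have hBR0 : constantCoeff BR = 1 := by
    rw [← coeff_zero_eq_constantCoeff_apply, hBRdef, coeff_mk, zero_add, hφlead]
  set BRi : PowerSeries R := BR.invOfUnit 1 with hBRidef
  have hBRmul : BR * BRi = 1 := PowerSeries.mul_invOfUnit BR 1 (by rw [hBR0]; rfl)
  set Bb : PowerSeries K := BR.map (algebraMap R K) with hBbdef
  set Bbi : PowerSeries K := BRi.map (algebraMap R K) with hBbidef
  have hφbB : φb = X ^ m * Bb := by
    rw [hφbdef, hφBR, map_mul, map_pow, PowerSeries.map_X]
  have hBbmul : Bb * Bbi = 1 := by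
    rw [hBbdef, hBbidef, ← map_mul, hBRmul, map_one]
  set CR : PowerSeries R := (d⁄dX R BR) * BRi with hCRdef
  set Cb : PowerSeries K := CR.map (algebraMap R K) with hCbdef
  have hDBb : d⁄dX K Bb = (d⁄dX R BR).map (algebraMap R K) := map_derivative _ _
  have hCbD : d⁄dX K Bb * Bbi = Cb := by
    rw [hDBb, hBbidef, ← map_mul, hCbdef, hCRdef]
  have hBbCb : Bb * Cb = d⁄dX K Bb := by
    rw [← hCbD]; rw [mul_comm (d⁄dX K Bb) Bbi, ← mul_assoc, hBbmul, one_mul]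
  set M : PowerSeries K := C ((m : K)) with hMdef
  -- u, W
  set u : PowerSeries K := PowerSeries.mk (fun n => PowerSeries.coeff (n + 1) f) with hudef
  have hcu : ∀ n, coeff n u = coeff (n+1) f := fun n => coeff_mk _ _
  have hfu : f = X * u := by
    ext n
    cases n with
    | zero => rw [hf0, coeff_zero_eq_constantCoeff_apply, map_mul, constantCoeff_X, zero_mul]
    | succ k => rw [coeff_succ_X_mul, hcu]
  have hu0 : constantCoeff u = 1 := by
    rw [← coeff_zero_eq_constantCoeff_apply, hcu, hf1]
  have hune : u ≠ 0 := fun h => by rw [h, map_zero] at hu0; exact one_ne_zero hu0.symm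
  set W : PowerSeries K := X * d⁄dX K u * u⁻¹ with hWdef
  have hWu : W * u = X * d⁄dX K u := by
    rw [hWdef, mul_assoc, PowerSeries.inv_mul_cancel u (by rw [hu0]; exact one_ne_zero), mul_one]
  have hW0 : coeff 0 W = 0 := by
    rw [coeff_zero_eq_constantCoeff_apply, hWdef, map_mul, map_mul, constantCoeff_X,
      zero_mul, zero_mul]
  -- bridging
  have hfB' : psub f φb = psub (X ^ m) f := by
    rw [← comp_eq_psub, ← comp_eq_psub]; exact hfB
  have hgf : psub g f = X := by rw [← comp_eq_psub]; exact hginv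
  -- main equation for W (E6)
  have e4 : psub (X ^ m) u = u ^ m * psub f Bb := by
    have h1 : psub f φb = (X * u) ^ m * psub f Bb := by
      rw [hφbB, psub_mul hf0', psub_pow hf0', psub_X hf0', hfu]
    have h2 : psub (X ^ m) f = X ^ m * psub (X ^ m) u := by
      conv_lhs => rw [hfu]
      rw [psub_mul hXm0, psub_X hXm0]
    apply mul_left_cancel₀ hXne
    rw [← h2, ← hfB', h1, mul_pow]
    ring
  have hDmul : ∀ a b : PowerSeries K, d⁄dX K (a * b) = a * d⁄dX K b + b * d⁄dX K a := by
    intro a b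
    rw [Derivation.leibniz, smul_eq_mul, smul_eq_mul]
  have hMnat : ((m : ℕ) : PowerSeries K) = M := (map_natCast (C (R := K)) m).symm
  have hDXm : d⁄dX K ((X : PowerSeries K) ^ m) = M * X ^ (m - 1) := by
    rw [Derivation.leibniz_pow, derivative_X, smul_eq_mul, mul_one, nsmul_eq_mul, hMnat]
  have hDpow : ∀ w : PowerSeries K, d⁄dX K (w ^ m) = M * w ^ (m - 1) * d⁄dX K w := by
    intro w
    rw [Derivation.leibniz_pow, smul_eq_mul, nsmul_eq_mul, hMnat, mul_assoc]
  have e8 : M * psub (X ^ m) W = (X * u) * psub f Cb * (1 + W) + M * W := by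
    have e5 : psub (X ^ m) (d⁄dX K u) * (M * X ^ (m-1))
        = u ^ m * (psub f (d⁄dX K Bb) * d⁄dX K f) + psub f Bb * (M * u ^ (m-1) * d⁄dX K u) := by
      have h := congrArg (d⁄dX K) e4
      rw [derivative_psub hXm0, hDmul, derivative_psub hf0', hDXm, hDpow] at h
      exact h
    have hA : psub (X ^ m) (d⁄dX K u) * X ^ m = psub (X ^ m) W * psub (X ^ m) u := by
      calc psub (X ^ m) (d⁄dX K u) * X ^ m
          = psub (X ^ m) (d⁄dX K u) * psub (X ^ m) X := by rw [psub_X hXm0]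
        _ = psub (X ^ m) (X * d⁄dX K u) := by
            rw [← psub_mul hXm0, mul_comm (d⁄dX K u) X]
        _ = psub (X ^ m) (W * u) := by rw [← hWu]
        _ = psub (X ^ m) W * psub (X ^ m) u := psub_mul hXm0 _ _
    have hXDf : X * d⁄dX K f = X * u * (1 + W) := by
      rw [hfu, hDmul, derivative_X, mul_one]
      linear_combination (-(X : PowerSeries K)) * hWu
    have hPQ : psub f Bb * psub f Bbi = 1 := by
      rw [← psub_mul hf0', hBbmul, psub_one]
    have hPDQ : psub f (d⁄dX K Bb) * psub f Bbi = psub f Cb := by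
      rw [← psub_mul hf0', hCbD]
    obtain ⟨μ, hμ⟩ : ∃ μ, m = μ + 1 := ⟨m - 1, by omega⟩
    subst hμ
    rw [Nat.add_sub_cancel] at e5
    have eA : u ^ (μ+1) * (M * (psub (X ^ (μ+1)) W * psub f Bb))
        = u ^ (μ+1) * (psub f (d⁄dX K Bb) * (X * u) * (1 + W) + M * (psub f Bb * W)) := by
      linear_combination (X : PowerSeries K) * e5 - M * hA
        + (u ^ (μ+1) * psub f (d⁄dX K Bb)) * hXDf - (psub f Bb * M * u ^ μ) * hWu
        - (M * psub (X ^ (μ+1)) W) * e4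
    have e7 : M * (psub (X ^ (μ+1)) W * psub f Bb)
        = psub f (d⁄dX K Bb) * (X * u) * (1 + W) + M * (psub f Bb * W) :=
      mul_left_cancel₀ (pow_ne_zero (μ+1) hune) eA
    linear_combination (psub f Bbi) * e7
      - (M * psub (X ^ (μ+1)) W - M * W) * hPQ + ((X * u) * (1 + W)) * hPDQ
  -- coefficient claims for f-side
  have hXu0 : coeff 0 (X * u) = 0 := by rw [← hfu]; exact hf0
  have h1W : ∀ b : ℕ, coeff b (1 + W) = if b = 0 then 1 else coeff b W := by
    intro b
    rw [map_add]
    cases b with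
    | zero => rw [if_pos rfl, hW0, add_zero, coeff_zero_eq_constantCoeff_apply, map_one]
    | succ b' => rw [if_neg (by omega), PowerSeries.coeff_one, if_neg (by omega), zero_add]
  have hfi : ∀ q i : ℕ, coeff q (f ^ i) = if i ≤ q then coeff (q - i) (u ^ i) else 0 := by
    intro q i
    rw [hfu, mul_pow, coeff_X_pow_mul_if]
  have hXDuj : ∀ j : ℕ, X * d⁄dX K (u ^ j) = C ((j : ℕ) : K) * (W * u ^ j) := by
    intro j
    cases j with
    | zero => simp
    | succ j' =>
      rw [Derivation.leibniz_pow, smul_eq_mul, nsmul_eq_mul, Nat.add_sub_cancel]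
      rw [show ((j' + 1 : ℕ) : PowerSeries K) = C ((j' + 1 : ℕ) : K) from
        (map_natCast (C (R := K)) _).symm]
      linear_combination (-(C (((j' + 1 : ℕ)) : K)) * u ^ j') * hWu
  have hCbmem2 : ∀ i, coeff i Cb ∈ SR := fun i => ⟨coeff i CR, by rw [hCbdef, coeff_map]⟩
  have exW : ∀ n : ℕ, (m:K) * (if m ∣ n then coeff (n / m) W else 0)
      = coeff n ((X * u) * psub f Cb * (1 + W)) + (m:K) * coeff n W := by
    intro n
    have h := congrArg (coeff n) e8
    rw [map_add, hMdef, coeff_C_mul, coeff_C_mul, coeff_psub_X_pow (by omega : 1 ≤ m)] at h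
    exact h
  have mainf : ∀ n : ℕ, ((m:K)^n * ((n-1).factorial : K) * coeff n W ∈ SR) ∧
      (∀ j : ℕ, (m:K)^n * (n.factorial : K) * coeff n (u ^ j) ∈ SR) := by
    intro n
    induction n using Nat.strong_induction_on with
    | _ n IH =>
    have partW : (m:K)^n * ((n-1).factorial : K) * coeff n W ∈ SR := by
      rcases Nat.eq_zero_or_pos n with rfl | hn
      · rw [hW0, mul_zero]
        exact zero_mem _
      have hpow : (m:K)^n = (m:K)^(n-1) * (m:K) := by
        conv_lhs => rw [show n = (n-1)+1 by omega]
        rw [pow_succ]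
      have heq : (m:K)^n * ((n-1).factorial : K) * coeff n W
          = (m:K)^(n-1) * ((n-1).factorial : K)
              * ((m:K) * (if m ∣ n then coeff (n / m) W else 0))
            - (m:K)^(n-1) * ((n-1).factorial : K)
              * coeff n ((X * u) * psub f Cb * (1 + W)) := by
        linear_combination (-((m:K)^(n-1) * ((n-1).factorial : K))) * exW n
          + (((n-1).factorial : K) * coeff n W) * hpow
      rw [heq]
      apply sub_mem
      · split_ifs with hd
        · have hdle : n / m ≤ n := Nat.div_le_self n m
          have hdlt : n / m < n := Nat.div_lt_self hn (by omega)
          have hw := workhorse n (n-1) (n/m) (n/m - 1) 0 0 0 0 (coeff (n/m) W) 1 1 1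
            (IH _ hdlt).1 (by simpa using one_mem SR) (by simpa using one_mem SR)
            (one_mem _) (by omega) (by omega)
          have hrw : (m:K)^(n-1) * ((n-1).factorial : K) * ((m:K) * coeff (n/m) W)
              = (m:K)^n * ((n-1).factorial : K) * (coeff (n/m) W * 1 * 1 * 1) := by
            linear_combination (-(((n-1).factorial : K) * coeff (n/m) W)) * hpow
          rw [hrw]
          exact hw
        · simp only [mul_zero]
          exact zero_mem _
      · rw [coeff_mul, Finset.mul_sum]
        apply sum_mem
        rintro ⟨s, b⟩ hsb
        rw [Finset.HasAntidiagonal.mem_antidiagonal] at hsb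
        rw [coeff_mul, Finset.sum_mul, Finset.mul_sum]
        apply sum_mem
        rintro ⟨p, q⟩ hpq
        rw [Finset.HasAntidiagonal.mem_antidiagonal] at hpq
        rw [coeff_psub, Finset.mul_sum, Finset.sum_mul, Finset.mul_sum]
        apply sum_mem
        intro i hi
        rw [Finset.mem_range] at hi
        cases p with
        | zero =>
          rw [hXu0]
          simp only [zero_mul, mul_zero]
          exact zero_mem _
        | succ p' =>
          rw [coeff_succ_X_mul, hfi]
          split_ifs with hiq
          · have hp1 := (IH p' (by omega)).2 1
            rw [pow_one] at hp1
            have hq1 := (IH (q - i) (by omega)).2 i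
            rcases Nat.eq_zero_or_pos b with rfl | hb
            · have hw := workhorse (n-1) (n-1) p' p' (q-i) (q-i) 0 0
                (coeff p' u) (coeff (q-i) (u^i)) 1 (coeff i Cb)
                hp1 hq1 (by simpa using one_mem SR) (hCbmem2 i) (by omega) (by omega)
              have hrw : (m:K)^(n-1) * ((n-1).factorial : K)
                    * (coeff p' u * (coeff i Cb * coeff (q-i) (u^i)) * coeff 0 (1 + W))
                  = (m:K)^(n-1) * ((n-1).factorial : K)
                    * (coeff p' u * coeff (q-i) (u^i) * 1 * coeff i Cb) := by
                rw [h1W 0, if_pos rfl]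
                ring
              rw [hrw]
              exact hw
            · have hbW := (IH b (by omega)).1
              have hw := workhorse (n-1) (n-1) p' p' (q-i) (q-i) b (b-1)
                (coeff p' u) (coeff (q-i) (u^i)) (coeff b W) (coeff i Cb)
                hp1 hq1 hbW (hCbmem2 i) (by omega) (by omega)
              have hrw : (m:K)^(n-1) * ((n-1).factorial : K)
                    * (coeff p' u * (coeff i Cb * coeff (q-i) (u^i)) * coeff b (1 + W))
                  = (m:K)^(n-1) * ((n-1).factorial : K)
                    * (coeff p' u * coeff (q-i) (u^i) * coeff b W * coeff i Cb) := by
                rw [h1W b, if_neg (by omega)]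
                ring
              rw [hrw]
              exact hw
          · simp only [mul_zero, zero_mul]
            exact zero_mem _
    refine ⟨partW, ?_⟩
    intro j
    rcases Nat.eq_zero_or_pos n with rfl | hn
    · rw [coeff_zero_eq_constantCoeff_apply, map_pow, hu0, one_pow]
      simpa using one_mem SR
    have hfacsucc : (n.factorial : K) = ((n-1).factorial : K) * (((n-1 : ℕ) : K) + 1) := by
      rw [show n = (n-1)+1 by omega, Nat.factorial_succ]
      push_cast
      ring
    have hext : coeff n (u ^ j) * (((n-1 : ℕ) : K) + 1)
        = (j : K) * ∑ p ∈ antidiagonal n, coeff p.1 W * coeff p.2 (u ^ j) := by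
      have h := congrArg (coeff n) (hXDuj j)
      rw [show n = (n-1)+1 by omega, coeff_succ_X_mul, coeff_derivative] at h
      rw [show (n-1)+1 = n by omega] at h
      rw [coeff_C_mul, coeff_mul] at h
      exact h
    have heq : (m:K)^n * (n.factorial : K) * coeff n (u ^ j)
        = (m:K)^n * ((n-1).factorial : K)
            * ((j : K) * ∑ p ∈ antidiagonal n, coeff p.1 W * coeff p.2 (u ^ j)) := by
      rw [← hext, hfacsucc]
      ring
    rw [heq, Finset.mul_sum, Finset.mul_sum]
    apply sum_mem
    rintro ⟨k, s⟩ hks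
    rw [Finset.HasAntidiagonal.mem_antidiagonal] at hks
    rcases Nat.eq_zero_or_pos k with rfl | hkpos
    · rw [hW0]
      simp only [zero_mul, mul_zero]
      exact zero_mem _
    have hWk : (m:K)^k * ((k-1).factorial : K) * coeff k W ∈ SR := by
      rcases Nat.lt_or_ge k n with h | h
      · exact (IH k h).1
      · rw [show k = n by omega]
        exact partW
    have hw := workhorse n (n-1) k (k-1) s s 0 0 (coeff k W) (coeff s (u^j)) 1 ((j:K))
      hWk ((IH s (by omega)).2 j) (by simpa using one_mem SR) (natmem j)
      (by omega) (by omega)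
    have hrw : (m:K)^n * ((n-1).factorial : K) * ((j:K) * (coeff k W * coeff s (u^j)))
        = (m:K)^n * ((n-1).factorial : K) * (coeff k W * coeff s (u^j) * 1 * (j:K)) := by
      ring
    rw [hrw]
    exact hw
  -- g-side
  have hfg : psub f g = X := by
    apply psub_cancel hg0' hg1
    rw [psub_assoc hf0' hg0', hgf, psub_X_right, psub_X hg0']
  have hgφ : psub φb g = g ^ m := by
    have hgm0 : constantCoeff (g ^ m) = 0 := by
      rw [map_pow, hg0', zero_pow (by omega)]
    have k2 : psub (g ^ m) f = φb := by
      have h1 : psub g (psub f φb) = φb := by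
        rw [psub_assoc hf0' hg0', hgf, psub_X_right]
      have h2 : psub g (psub f φb) = psub (g ^ m) f := by
        rw [hfB', psub_assoc hXm0 hg0', psub_pow hg0', psub_X hg0']
      rw [← h1, h2]
    rw [← k2, ← psub_assoc hf0' hgm0, hfg, psub_X hgm0]
  set v : PowerSeries K := PowerSeries.mk (fun n => PowerSeries.coeff (n + 1) g) with hvdef
  have hcv : ∀ n, coeff n v = coeff (n+1) g := fun n => coeff_mk _ _
  have hgv : g = X * v := by
    ext n
    cases n with
    | zero => rw [hg0, coeff_zero_eq_constantCoeff_apply, map_mul, constantCoeff_X, zero_mul]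
    | succ k => rw [coeff_succ_X_mul, hcv]
  have hv0 : constantCoeff v = 1 := by
    rw [← coeff_zero_eq_constantCoeff_apply, hcv, hg1]
  have hvne : v ≠ 0 := fun h => by rw [h, map_zero] at hv0; exact one_ne_zero hv0.symm
  set Wg : PowerSeries K := X * d⁄dX K v * v⁻¹ with hWgdef
  have hWgv : Wg * v = X * d⁄dX K v := by
    rw [hWgdef, mul_assoc, PowerSeries.inv_mul_cancel v (by rw [hv0]; exact one_ne_zero), mul_one]
  have hWg0 : coeff 0 Wg = 0 := by
    rw [coeff_zero_eq_constantCoeff_apply, hWgdef, map_mul, map_mul, constantCoeff_X,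
      zero_mul, zero_mul]
  set Ψ : PowerSeries K := M + X * Cb with hΨdef
  have f3 : psub φb Wg * Ψ + X * Cb = M * Wg := by
    have f1 : Bb * psub φb v = v ^ m := by
      apply mul_left_cancel₀ hXne
      have h1 : psub φb g = φb * psub φb v := by
        conv_lhs => rw [hgv]
        rw [psub_mul hφb0, psub_X hφb0]
      calc X ^ m * (Bb * psub φb v) = φb * psub φb v := by rw [hφbB]; ring
        _ = psub φb g := h1.symm
        _ = g ^ m := hgφ
        _ = X ^ m * v ^ m := by rw [hgv, mul_pow]
    have f2 : Bb * (psub φb (d⁄dX K v) * d⁄dX K φb) + psub φb v * d⁄dX K Bb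
        = M * v ^ (m-1) * d⁄dX K v := by
      have h := congrArg (d⁄dX K) f1
      rw [hDmul, derivative_psub hφb0, hDpow] at h
      exact h
    have hXDφ : X * d⁄dX K φb = φb * Ψ := by
      rw [hφbB, hDmul, hDXm, hΨdef]
      obtain ⟨μ, hμ⟩ : ∃ μ, m = μ + 1 := ⟨m - 1, by omega⟩
      subst hμ
      rw [Nat.add_sub_cancel]
      linear_combination (-((X:PowerSeries K) ^ (μ+1) * X)) * hBbCb
    have hint : psub φb (d⁄dX K v) * φb = psub φb Wg * psub φb v := by
      calc psub φb (d⁄dX K v) * φb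
          = psub φb (d⁄dX K v) * psub φb X := by rw [psub_X hφb0]
        _ = psub φb (X * d⁄dX K v) := by
            rw [← psub_mul hφb0, mul_comm (d⁄dX K v) X]
        _ = psub φb (Wg * v) := by rw [← hWgv]
        _ = psub φb Wg * psub φb v := psub_mul hφb0 _ _
    obtain ⟨μ, hμ⟩ : ∃ μ, m = μ + 1 := ⟨m - 1, by omega⟩
    subst hμ
    rw [Nat.add_sub_cancel] at f2
    have eGv : v ^ (μ+1) * (Bb * psub φb Wg * Ψ + X * d⁄dX K Bb)
        = v ^ (μ+1) * (M * (Wg * Bb)) := by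
      linear_combination (X * Bb) * f2 - (Bb ^ 2 * psub φb (d⁄dX K v)) * hXDφ
        - (Bb ^ 2 * Ψ) * hint - (Bb * Ψ * psub φb Wg + X * d⁄dX K Bb) * f1
        - (M * Bb * v ^ μ) * hWgv
    have e7g : Bb * psub φb Wg * Ψ + X * d⁄dX K Bb = M * (Wg * Bb) :=
      mul_left_cancel₀ (pow_ne_zero (μ+1) hvne) eGv
    linear_combination Bbi * e7g - (psub φb Wg * Ψ - M * Wg) * hBbmul - X * hCbD
  have hCbmem : ∀ i, coeff i Cb ∈ SR := fun i => ⟨coeff i CR, by rw [hCbdef, coeff_map]⟩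
  have hBbkmem : ∀ (i k : ℕ), coeff i (Bb ^ k) ∈ SR := fun i k =>
    ⟨coeff i (BR ^ k), by rw [hBbdef, ← map_pow, coeff_map]⟩
  have hXCb0 : coeff 0 (X * Cb) = 0 := by
    rw [coeff_zero_eq_constantCoeff_apply, map_mul, constantCoeff_X, zero_mul]
  have hΨmem : ∀ b, coeff b Ψ ∈ SR := by
    intro b
    rw [hΨdef, map_add]
    apply add_mem
    · rw [hMdef, PowerSeries.coeff_C]
      split_ifs
      · exact mmem
      · exact zero_mem _
    · cases b with
      | zero => rw [hXCb0]; exact zero_mem _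
      | succ b' => rw [coeff_succ_X_mul]; exact hCbmem b'
  have hφbk : ∀ (a k : ℕ), coeff a (φb ^ k)
      = if m * k ≤ a then coeff (a - m * k) (Bb ^ k) else 0 := by
    intro a k
    rw [hφbB, mul_pow, ← pow_mul, coeff_X_pow_mul_if]
  have mainWg : ∀ n : ℕ, (m:K)^n * ((n-1).factorial : K) * coeff n Wg ∈ SR := by
    intro n
    induction n using Nat.strong_induction_on with
    | _ n IH =>
    rcases Nat.eq_zero_or_pos n with rfl | hn
    · rw [hWg0, mul_zero]
      exact zero_mem _
    have hpow : (m:K)^n = (m:K)^(n-1) * (m:K) := by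
      conv_lhs => rw [show n = (n-1)+1 by omega]
      rw [pow_succ]
    have hext : coeff n (psub φb Wg * Ψ) + coeff n (X * Cb) = (m:K) * coeff n Wg := by
      have h := congrArg (coeff n) f3
      rw [map_add, hMdef, coeff_C_mul] at h
      exact h
    have heq : (m:K)^n * ((n-1).factorial : K) * coeff n Wg
        = (m:K)^(n-1) * ((n-1).factorial : K) * coeff n (psub φb Wg * Ψ)
          + (m:K)^(n-1) * ((n-1).factorial : K) * coeff n (X * Cb) := by
      linear_combination (-((m:K)^(n-1) * ((n-1).factorial : K))) * hext
        + (((n-1).factorial : K) * coeff n Wg) * hpow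
    rw [heq]
    apply add_mem
    · rw [coeff_mul, Finset.mul_sum]
      apply sum_mem
      rintro ⟨a, b⟩ hab
      rw [Finset.HasAntidiagonal.mem_antidiagonal] at hab
      rw [coeff_psub, Finset.sum_mul, Finset.mul_sum]
      apply sum_mem
      intro k hk
      rw [Finset.mem_range] at hk
      rw [hφbk]
      split_ifs with hmk
      · rcases Nat.eq_zero_or_pos k with rfl | hkpos
        · rw [hWg0]
          simp only [zero_mul, mul_zero]
          exact zero_mem _
        · have hklt : k < n := by nlinarith
          have hw := workhorse (n-1) (n-1) k (k-1) 0 0 0 0 (coeff k Wg) 1 1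
            (coeff (a - m*k) (Bb ^ k) * coeff b Ψ)
            (IH k hklt) (by simpa using one_mem SR) (by simpa using one_mem SR)
            (mul_mem (hBbkmem _ _) (hΨmem b)) (by omega) (by omega)
          have hrw : (m:K)^(n-1) * ((n-1).factorial : K)
                * (coeff k Wg * coeff (a - m*k) (Bb ^ k) * coeff b Ψ)
              = (m:K)^(n-1) * ((n-1).factorial : K)
                * (coeff k Wg * 1 * 1 * (coeff (a - m*k) (Bb ^ k) * coeff b Ψ)) := by
            ring
          rw [hrw]
          exact hw
      · simp only [zero_mul, mul_zero]
        exact zero_mem _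
    · rw [show n = (n-1)+1 by omega, coeff_succ_X_mul]
      exact mul_mem (mul_mem (pow_mem mmem _) (natmem _)) (hCbmem _)
  have mainv : ∀ n : ℕ, (m:K)^n * (n.factorial : K) * coeff n v ∈ SR := by
    intro n
    induction n using Nat.strong_induction_on with
    | _ n IH =>
    rcases Nat.eq_zero_or_pos n with rfl | hn
    · rw [coeff_zero_eq_constantCoeff_apply, hv0]
      simpa using one_mem SR
    have hfacsucc : (n.factorial : K) = ((n-1).factorial : K) * (((n-1 : ℕ) : K) + 1) := by
      rw [show n = (n-1)+1 by omega, Nat.factorial_succ]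
      push_cast
      ring
    have hext : coeff n v * (((n-1 : ℕ) : K) + 1)
        = ∑ p ∈ antidiagonal n, coeff p.1 Wg * coeff p.2 v := by
      have h := congrArg (coeff n) hWgv.symm
      rw [show n = (n-1)+1 by omega, coeff_succ_X_mul, coeff_derivative, coeff_mul] at h
      rw [show (n-1)+1 = n by omega] at h
      exact h
    have heq : (m:K)^n * (n.factorial : K) * coeff n v
        = ∑ p ∈ antidiagonal n, (m:K)^n * ((n-1).factorial : K)
            * (coeff p.1 Wg * coeff p.2 v) := by
      rw [← Finset.mul_sum, ← hext, hfacsucc]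
      ring
    rw [heq]
    apply sum_mem
    rintro ⟨k, s⟩ hks
    rw [Finset.HasAntidiagonal.mem_antidiagonal] at hks
    rcases Nat.eq_zero_or_pos k with rfl | hkpos
    · rw [hWg0]
      simp only [zero_mul, mul_zero]
      exact zero_mem _
    have hslt : s < n := by omega
    have hw := workhorse n (n-1) k (k-1) s s 0 0 (coeff k Wg) (coeff s v) 1 1
      (mainWg k) (IH s hslt) (by simpa using one_mem SR) (one_mem SR) (by omega) (by omega)
    have hrw : (m:K)^n * ((n-1).factorial : K) * (coeff k Wg * coeff s v)
        = (m:K)^n * ((n-1).factorial : K) * (coeff k Wg * coeff s v * 1 * 1) := by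
      ring
    rw [hrw]
    exact hw
  -- assembly
  have hfacne : ∀ k : ℕ, ((m:K)^k * (k.factorial : K)) ≠ 0 := fun k =>
    mul_ne_zero (pow_ne_zero _ hm0) (Nat.cast_ne_zero.mpr (Nat.factorial_ne_zero k))
  constructor
  · have hex : ∀ k : ℕ, ∃ r : R, algebraMap R K r = (m:K)^k * (k.factorial : K) * coeff k u := by
      intro k
      have := (mainf k).2 1
      rw [pow_one] at this
      exact RingHom.mem_range.mp this
    choose a ha using hex
    refine ⟨a, ?_, ?_⟩
    · apply hinj
      rw [ha 0, map_one]
      simp [hcu 0, hf1]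
    · intro k
      rw [← hcu k, eq_div_iff (hfacne k), mul_comm]
      exact (ha k).symm
  · have hex : ∀ k : ℕ, ∃ r : R, algebraMap R K r = (m:K)^k * (k.factorial : K) * coeff k v := by
      intro k
      exact RingHom.mem_range.mp (mainv k)
    choose a ha using hex
    refine ⟨a, ?_, ?_⟩
    · apply hinj
      rw [ha 0, map_one]
      simp [hcv 0, hg1]
    · intro k
      rw [← hcv k, eq_div_iff (hfacne k), mul_comm]
      exact (ha k).symm
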